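/- For an n×n circulant matrix whose first row corresponds to the polynomial p(x) = 1 + x − x², the determinant equals the product of p(ω) over all n-th roots of unity ω, and this product equals ±(Lₙ − 1 − (−1)ⁿ) up to sign, where Lₙ is the n-th Lucas number. -/

import Mathlib

/-- Lucas numbers: L₀ = 2, L₁ = 1, L_{n+2} = L_{n+1} + Lₙ. -/
def lucas : ℕ → ℤ
  | 0 => 2
  | 1 => 1
  | n + 2 => lucas (n + 1) + lucas n

/-- Coefficients of the polynomial p(x) = 1 + x − x² as a function on Fin n. -/
def pCoeff (n : ℕ) [NeZero n] : Fin n → ℤ := fun k =>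
  if (k : ℕ) = 0 then 1 else if (k : ℕ) = 1 then 1 else if (k : ℕ) = 2 then -1 else 0

/-- The n×n circulant matrix whose (i,j)-entry is the coefficient of
x^{(j−i) mod n} in p(x) = 1 + x − x². -/
def circMat (n : ℕ) [NeZero n] : Matrix (Fin n) (Fin n) ℤ :=
  fun i j => pCoeff n (j - i)

lemma sum_pCoeff_mul {n : ℕ} [NeZero n] (hn : 3 ≤ n) (x : ℂ) :
    ∑ m : Fin n, (pCoeff n m : ℂ) * x ^ (m : ℕ) = 1 + x - x ^ 2 := by
  have : ∀ m : Fin n, (pCoeff n m : ℂ) * x ^ (m : ℕ) =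
      (fun j : ℕ => ((if j = 0 then 1 else if j = 1 then 1 else if j = 2 then (-1 : ℤ) else 0 : ℤ)
        : ℂ) * x ^ j) (m : ℕ) := by
    intro m; simp [pCoeff]
  rw [Finset.sum_congr rfl (fun m _ => this m),
    Fin.sum_univ_eq_sum_range (fun j : ℕ => ((if j = 0 then 1 else if j = 1 then 1 else
      if j = 2 then (-1 : ℤ) else 0 : ℤ) : ℂ) * x ^ j) n,
    ← Finset.sum_range_add_sum_Ico _ hn]
  rw [Finset.sum_eq_zero (s := Finset.Ico 3 n) (by
    intro m hm
    obtain ⟨h3, _⟩ := Finset.mem_Ico.mp hm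
    have h0 : m ≠ 0 := by omega
    have h1 : m ≠ 1 := by omega
    have h2 : m ≠ 2 := by omega
    simp [h0, h1, h2])]
  simp [Finset.sum_range_succ]
  ring

lemma circ_mul_vand {n : ℕ} [NeZero n] (hn : 3 ≤ n) {ζ : ℂ} (hζ : ζ ^ n = 1) :
    (circMat n).map (Int.cast : ℤ → ℂ) * Matrix.vandermonde (fun k : Fin n => ζ ^ (k : ℕ)) =
      Matrix.vandermonde (fun k : Fin n => ζ ^ (k : ℕ)) *
        Matrix.diagonal (fun k : Fin n => 1 + ζ ^ (k : ℕ) - (ζ ^ (k : ℕ)) ^ 2) := by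
  have hpow : ∀ (t : ℂ), t ^ n = 1 → ∀ a : ℕ, t ^ (a % n) = t ^ a := by
    intro t ht a
    conv_rhs => rw [← Nat.mod_add_div a n]
    rw [pow_add, pow_mul, ht, one_pow, mul_one]
  ext i k
  rw [Matrix.mul_apply, Matrix.mul_diagonal]
  set t := ζ ^ (k : ℕ) with htdef
  have ht : t ^ n = 1 := by rw [htdef, ← pow_mul, mul_comm, pow_mul, hζ, one_pow]
  have key : ∀ j : Fin n, ((circMat n).map (Int.cast : ℤ → ℂ)) i j *
      Matrix.vandermonde (fun k : Fin n => ζ ^ (k : ℕ)) j k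
      = (pCoeff n (j - i) : ℂ) * t ^ (j : ℕ) := by
    intro j
    simp only [Matrix.map_apply, Matrix.vandermonde, circMat, Matrix.of_apply]
    rw [← pow_mul, mul_comm (j : ℕ) (k : ℕ), pow_mul]
  rw [Finset.sum_congr rfl (fun j _ => key j)]
  rw [← Fintype.sum_equiv (Equiv.addRight i)
    (fun m => (pCoeff n m : ℂ) * (t ^ (m : ℕ) * t ^ (i : ℕ)))
    (fun j => (pCoeff n (j - i) : ℂ) * t ^ (j : ℕ))
    (by
      intro m
      simp only [Equiv.coe_addRight, add_sub_cancel_right]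
      congr 1
      rw [Fin.val_add, hpow t ht, pow_add])]
  simp only [← mul_assoc]
  rw [← Finset.sum_mul, sum_pCoeff_mul hn t]
  have hv : Matrix.vandermonde (fun k : Fin n => ζ ^ (k : ℕ)) i k = t ^ (i : ℕ) := by
    simp only [Matrix.vandermonde, Matrix.of_apply, htdef]
    rw [← pow_mul, mul_comm, pow_mul]
  rw [hv]
  ring

lemma circ_det_complex {n : ℕ} [NeZero n] (hn : 3 ≤ n) {ζ : ℂ} (h : IsPrimitiveRoot ζ n) :
    ((circMat n).det : ℂ) = ∏ k : Fin n, (1 + ζ ^ (k : ℕ) - (ζ ^ (k : ℕ)) ^ 2) := by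
  have hinj : Function.Injective (fun k : Fin n => ζ ^ (k : ℕ)) := by
    intro a b hab
    exact Fin.ext (h.pow_inj a.2 b.2 hab)
  have hV : (Matrix.vandermonde (fun k : Fin n => ζ ^ (k : ℕ))).det ≠ 0 :=
    Matrix.det_vandermonde_ne_zero_iff.mpr hinj
  have hmul := congrArg Matrix.det (circ_mul_vand hn h.pow_eq_one)
  rw [Matrix.det_mul, Matrix.det_mul, Matrix.det_diagonal] at hmul
  have hdet : ((circMat n).det : ℂ) = ((circMat n).map (Int.cast : ℤ → ℂ)).det := by
    have := RingHom.map_det (Int.castRingHom ℂ) (circMat n)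
    simpa [RingHom.mapMatrix_apply] using this
  rw [hdet]
  apply mul_right_cancel₀ hV
  rw [hmul, mul_comm]

lemma prod_sub_pow {n : ℕ} [NeZero n] {ζ : ℂ} (h : IsPrimitiveRoot ζ n) (c : ℂ) :
    ∏ k : Fin n, (c - ζ ^ (k : ℕ)) = c ^ n - 1 := by
  have hpos : 0 < n := NeZero.pos n
  have hpoly := Polynomial.X_pow_sub_one_eq_prod hpos h
  have := congrArg (Polynomial.eval c) hpoly
  rw [Polynomial.eval_prod (Polynomial.nthRootsFinset n (1 : ℂ)) (fun z => Polynomial.X - Polynomial.C z) c] at this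
  simp only [Polynomial.eval_sub, Polynomial.eval_pow, Polynomial.eval_X, Polynomial.eval_one,
    Polynomial.eval_C] at this
  rw [this]
  refine Finset.prod_bij (fun (k : Fin n) _ => ζ ^ (k : ℕ)) ?_ ?_ ?_ ?_
  · intro k _
    refine (Polynomial.mem_nthRootsFinset hpos (1 : ℂ)).mpr ?_
    rw [← pow_mul, mul_comm, pow_mul, h.pow_eq_one, one_pow]
  · intro a _ b _ hab
    exact Fin.ext (h.pow_inj a.2 b.2 hab)
  · intro b hb
    obtain ⟨i, hik, hi⟩ := h.eq_pow_of_pow_eq_one ((Polynomial.mem_nthRootsFinset hpos (1 : ℂ)).mp hb)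
    exact ⟨⟨i, hik⟩, Finset.mem_univ _, hi⟩
  · intro k _; rfl

lemma lucas_closed (φ ψ : ℂ) (hsum : φ + ψ = 1) (hφ : φ ^ 2 = φ + 1) (hψ : ψ ^ 2 = ψ + 1) :
    ∀ m : ℕ, ((lucas m : ℤ) : ℂ) = φ ^ m + ψ ^ m
  | 0 => by simp [lucas]; norm_num
  | 1 => by simp [lucas, ← hsum]
  | (m + 2) => by
    have h1 := lucas_closed φ ψ hsum hφ hψ (m + 1)
    have h0 := lucas_closed φ ψ hsum hφ hψ m
    rw [show lucas (m + 2) = lucas (m + 1) + lucas m from rfl]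
    push_cast
    rw [h1, h0]
    have e1 : φ ^ (m + 2) = φ ^ m * φ ^ 2 := by ring
    have e2 : ψ ^ (m + 2) = ψ ^ m * ψ ^ 2 := by ring
    rw [e1, e2, hφ, hψ]
    ring

/-- The determinant of the circulant matrix of p(x) = 1 + x − x² equals the
product of p(ω) over the n-th roots of unity, and equals ±(Lₙ − 1 − (−1)ⁿ). -/
theorem circulant_det_lucas (n : ℕ) [NeZero n] (hn : 3 ≤ n) :
    (∀ ζ : ℂ, IsPrimitiveRoot ζ n →
      ((circMat n).det : ℂ) = ∏ k : Fin n, (1 + ζ ^ (k : ℕ) - (ζ ^ (k : ℕ)) ^ 2)) ∧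
    ((circMat n).det = lucas n - 1 - (-1) ^ n ∨
      (circMat n).det = -(lucas n - 1 - (-1) ^ n)) := by
  constructor
  · intro ζ hζ; exact circ_det_complex hn hζ
  · obtain ⟨ζ, h⟩ : ∃ ζ : ℂ, IsPrimitiveRoot ζ n :=
      ⟨_, Complex.isPrimitiveRoot_exp n (NeZero.ne n)⟩
    set s : ℂ := ((Real.sqrt 5 : ℝ) : ℂ) with hs
    have h5 : s ^ 2 = 5 := by
      rw [hs, ← Complex.ofReal_pow, Real.sq_sqrt (by norm_num : (0:ℝ) ≤ 5)]
      norm_num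
    set φ : ℂ := (1 + s) / 2 with hφdef
    set ψ : ℂ := (1 - s) / 2 with hψdef
    have hsum : φ + ψ = 1 := by rw [hφdef, hψdef]; ring
    have hprod : φ * ψ = -1 := by
      rw [hφdef, hψdef]; linear_combination (-1/4 : ℂ) * h5
    have hφ : φ ^ 2 = φ + 1 := by linear_combination φ * hsum - hprod
    have hψ : ψ ^ 2 = ψ + 1 := by linear_combination ψ * hsum - hprod
    have hfac : ∀ x : ℂ, 1 + x - x ^ 2 = (φ - x) * (x - ψ) := by
      intro x; linear_combination (-x) * hsum + hprod
    have hval : ((circMat n).det : ℂ) = (-1 : ℂ) ^ n * ((-1) ^ n - (lucas n : ℂ) + 1) := by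
      rw [circ_det_complex hn h]
      calc ∏ k : Fin n, (1 + ζ ^ (k : ℕ) - (ζ ^ (k : ℕ)) ^ 2)
          = ∏ k : Fin n, ((φ - ζ ^ (k : ℕ)) * (ζ ^ (k : ℕ) - ψ)) := by
            exact Finset.prod_congr rfl (fun k _ => hfac _)
        _ = (∏ k : Fin n, (φ - ζ ^ (k : ℕ))) * ∏ k : Fin n, (ζ ^ (k : ℕ) - ψ) :=
            Finset.prod_mul_distrib
        _ = (φ ^ n - 1) * ∏ k : Fin n, (-(ψ - ζ ^ (k : ℕ))) := by
            rw [prod_sub_pow h φ]; congr 1; exact Finset.prod_congr rfl (fun k _ => by ring)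
        _ = (φ ^ n - 1) * ((-1) ^ n * (ψ ^ n - 1)) := by
            congr 1
            calc ∏ k : Fin n, (-(ψ - ζ ^ (k : ℕ)))
                = ∏ k : Fin n, ((-1) * (ψ - ζ ^ (k : ℕ))) :=
                  Finset.prod_congr rfl (fun k _ => by ring)
              _ = (-1 : ℂ) ^ n * (ψ ^ n - 1) := by
                  rw [Finset.prod_mul_distrib, Finset.prod_const, prod_sub_pow h ψ]
                  simp
        _ = (-1 : ℂ) ^ n * ((φ * ψ) ^ n - (φ ^ n + ψ ^ n) + 1) := by
            rw [mul_pow]; ring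
        _ = (-1 : ℂ) ^ n * ((-1) ^ n - (lucas n : ℂ) + 1) := by
            rw [hprod, lucas_closed φ ψ hsum hφ hψ n]
    rcases Nat.even_or_odd n with he | ho
    · right
      have : ((circMat n).det : ℂ) = ((-(lucas n - 1 - (-1) ^ n) : ℤ) : ℂ) := by
        rw [hval, he.neg_one_pow]
        push_cast [he.neg_one_pow]
        ring
      exact_mod_cast this
    · left
      have : ((circMat n).det : ℂ) = (((lucas n - 1 - (-1) ^ n) : ℤ) : ℂ) := by
        rw [hval, ho.neg_one_pow]
        push_cast [ho.neg_one_pow]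
        ring
      exact_mod_cast this
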